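/- Performance difference lemma: for two policies π and π' in a finite-horizon MDP with common transition kernel P, reward functions r_h : S×A → ℝ, and horizon H, one has V₁^{π}(s₁) − V₁^{π'}(s₁) = ∑_{h=1}^{H} ∑_{s} μ_h^{π}(s) ∑_{a} π_h(a|s) · A_h^{π'}(s,a), where μ_h^{π} is the state distribution at stage h induced by π from s₁, and A_h^{π'}(s,a) = Q_h^{π'}(s,a) − V_h^{π'}(s) is the advantage function of π'. -/

import Mathlib

open Finset

variable {S A : Type*}

/-- Auxiliary backward value recursion: `valAux P r π k h s` is the value at stage `h`,
state `s`, with `k` stages remaining (including `h`). -/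
noncomputable def valAux [Fintype S] [Fintype A] (P : ℕ → S → A → S → ℝ)
    (r : ℕ → S → A → ℝ) (π : ℕ → S → A → ℝ) : ℕ → ℕ → S → ℝ
  | 0, _, _ => 0
  | k + 1, h, s => ∑ a, π h s a *
      (r h s a + ∑ s', P h s a s' * valAux P r π k (h + 1) s')

/-- Value function `V_h^{π,r,P}(s)` in an `H`-horizon MDP (stages `1,…,H`). -/
noncomputable def Val [Fintype S] [Fintype A] (H : ℕ) (P : ℕ → S → A → S → ℝ)
    (r : ℕ → S → A → ℝ) (π : ℕ → S → A → ℝ) (h : ℕ) (s : S) : ℝ :=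
  valAux P r π (H + 1 - h) h s

/-- Q-value function `Q_h^{π,r,P}(s,a)`; satisfies Bellman's equation, with
`Val H P r π (H+1) = 0`, so `Q_H = r_H`. -/
noncomputable def Qval [Fintype S] [Fintype A] (H : ℕ) (P : ℕ → S → A → S → ℝ)
    (r : ℕ → S → A → ℝ) (π : ℕ → S → A → ℝ) (h : ℕ) (s : S) (a : A) : ℝ :=
  r h s a + ∑ s', P h s a s' * Val H P r π (h + 1) s'

/-- State distribution `μ_h^{π,P,s₁}` at stage `h` induced by policy `π` and kernels `P`
from initial state `s₁`. -/
noncomputable def occup [Fintype S] [Fintype A] [DecidableEq S]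
    (P : ℕ → S → A → S → ℝ) (π : ℕ → S → A → ℝ) (s₁ : S) : ℕ → S → ℝ
  | 0, _ => 0
  | 1, s => if s = s₁ then 1 else 0
  | h + 2, s' => ∑ s, ∑ a, occup P π s₁ (h + 1) s * π (h + 1) s a * P (h + 1) s a s'

lemma occup_succ' [Fintype S] [Fintype A] [DecidableEq S]
    (P : ℕ → S → A → S → ℝ) (π : ℕ → S → A → ℝ) (s₁ : S) (n : ℕ) (s' : S) :
    occup P π s₁ (n + 2) s' =
      ∑ s, ∑ a, occup P π s₁ (n + 1) s * π (n + 1) s a * P (n + 1) s a s' := rfl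

lemma bellman [Fintype S] [Fintype A] (H : ℕ) (P : ℕ → S → A → S → ℝ)
    (r : ℕ → S → A → ℝ) (π : ℕ → S → A → ℝ) (h : ℕ) (hh : h ≤ H) (s : S) :
    Val H P r π h s = ∑ a, π h s a * Qval H P r π h s a := by
  have h1 : H + 1 - h = (H - h) + 1 := by omega
  have h2 : H + 1 - (h + 1) = H - h := by omega
  simp only [Val, Qval, h1, h2]
  rfl

lemma val_top [Fintype S] [Fintype A] (H : ℕ) (P : ℕ → S → A → S → ℝ)
    (r : ℕ → S → A → ℝ) (π : ℕ → S → A → ℝ) (s : S) :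
    Val H P r π (H + 1) s = 0 := by
  unfold Val
  have : H + 1 - (H + 1) = 0 := by omega
  rw [this]
  rfl

/-- One-step pushforward: expected Q-value under occupancy equals expected reward plus
next-step occupancy-weighted value. -/
lemma step_push [Fintype S] [Fintype A] [DecidableEq S]
    (H : ℕ) (P : ℕ → S → A → S → ℝ) (r : ℕ → S → A → ℝ) (π σ : ℕ → S → A → ℝ)
    (s₁ : S) (h : ℕ) (hh : 1 ≤ h) :
    ∑ s, occup P π s₁ h s * ∑ a, π h s a * Qval H P r σ h s a =
      (∑ s, occup P π s₁ h s * ∑ a, π h s a * r h s a) +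
      ∑ s', occup P π s₁ (h + 1) s' * Val H P r σ (h + 1) s' := by
  obtain ⟨n, rfl⟩ : ∃ n, h = n + 1 := ⟨h - 1, by omega⟩
  have key : ∀ s' : S, occup P π s₁ (n + 2) s' * Val H P r σ (n + 2) s' =
      ∑ s, ∑ a, occup P π s₁ (n + 1) s * π (n + 1) s a * P (n + 1) s a s' *
        Val H P r σ (n + 2) s' := by
    intro s'
    rw [occup_succ', Finset.sum_mul]
    congr 1; ext s
    rw [Finset.sum_mul]
  simp only [key]
  rw [Finset.sum_comm]
  simp only [Qval, mul_add, Finset.mul_sum, Finset.sum_add_distrib]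
  congr 1
  refine Finset.sum_congr rfl fun s _ => ?_
  rw [Finset.sum_comm]
  exact Finset.sum_congr rfl fun a _ => Finset.sum_congr rfl fun s' _ => by ring

theorem telescope_step [Fintype S] [Fintype A] [DecidableEq S]
    (H : ℕ) (P : ℕ → S → A → S → ℝ) (r : ℕ → S → A → ℝ) (π π' : ℕ → S → A → ℝ)
    (s₁ : S) (hπ1 : ∀ h s, ∑ a, π h s a = 1)
    (h : ℕ) (hh : 1 ≤ h) (hH : h ≤ H) :
    ∑ s, occup P π s₁ h s *
        ∑ a, π h s a * (Qval H P r π' h s a - Val H P r π' h s) =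
      (∑ s, occup P π s₁ h s * (Val H P r π h s - Val H P r π' h s)) -
      ∑ s, occup P π s₁ (h + 1) s * (Val H P r π (h + 1) s - Val H P r π' (h + 1) s) := by
  have e1 : ∀ s, ∑ a, π h s a * (Qval H P r π' h s a - Val H P r π' h s) =
      (∑ a, π h s a * Qval H P r π' h s a) - Val H P r π' h s := by
    intro s
    rw [show ∀ x : ℝ, (∑ a, π h s a * Qval H P r π' h s a) - x =
      (∑ a, π h s a * Qval H P r π' h s a) - (∑ a, π h s a) * x from
      fun x => by rw [hπ1 h s, one_mul]]
    rw [Finset.sum_mul, ← Finset.sum_sub_distrib]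
    congr 1; ext a; ring
  simp only [e1, mul_sub, Finset.sum_sub_distrib]
  rw [step_push H P r π π' s₁ h hh]
  have eπ : ∑ s, occup P π s₁ h s * Val H P r π h s =
      (∑ s, occup P π s₁ h s * ∑ a, π h s a * r h s a) +
      ∑ s', occup P π s₁ (h + 1) s' * Val H P r π (h + 1) s' := by
    have : ∀ s, Val H P r π h s = ∑ a, π h s a * Qval H P r π h s a :=
      fun s => bellman H P r π h hH s
    simp only [this]
    exact step_push H P r π π s₁ h hh
  rw [eπ]
  have e2 : (∑ s, occup P π s₁ h s * ∑ a, π h s a * Val H P r π' h s)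
      = ∑ s, occup P π s₁ h s * Val H P r π' h s :=
    Finset.sum_congr rfl fun s _ => by rw [← Finset.sum_mul, hπ1, one_mul]
  rw [e2]
  ring

/-- Performance difference lemma:
V₁^{π}(s₁) − V₁^{π'}(s₁) = ∑_{h=1}^{H} ∑_s μ_h^{π}(s) ∑_a π_h(a|s) A_h^{π'}(s,a). -/
theorem performance_difference [Fintype S] [Fintype A] [DecidableEq S]
    (H : ℕ) (hH : 1 ≤ H)
    (P : ℕ → S → A → S → ℝ) (r : ℕ → S → A → ℝ) (π π' : ℕ → S → A → ℝ) (s₁ : S)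
    (hP0 : ∀ h s a s', 0 ≤ P h s a s') (hP1 : ∀ h s a, ∑ s', P h s a s' = 1)
    (hπ0 : ∀ h s a, 0 ≤ π h s a) (hπ1 : ∀ h s, ∑ a, π h s a = 1)
    (hπ'0 : ∀ h s a, 0 ≤ π' h s a) (hπ'1 : ∀ h s, ∑ a, π' h s a = 1) :
    Val H P r π 1 s₁ - Val H P r π' 1 s₁ =
      ∑ h ∈ Finset.Icc 1 H, ∑ s, occup P π s₁ h s *
        ∑ a, π h s a * (Qval H P r π' h s a - Val H P r π' h s) := by
  set D : ℕ → ℝ := fun h =>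
    ∑ s, occup P π s₁ h s * (Val H P r π h s - Val H P r π' h s) with hD
  have step : ∀ h ∈ Finset.Icc 1 H,
      (∑ s, occup P π s₁ h s *
        ∑ a, π h s a * (Qval H P r π' h s a - Val H P r π' h s)) = D h - D (h + 1) := by
    intro h hh
    rw [Finset.mem_Icc] at hh
    exact telescope_step H P r π π' s₁ hπ1 h hh.1 hh.2
  rw [Finset.sum_congr rfl step]
  have hIcc : Finset.Icc 1 H = Finset.Ico 1 (H + 1) := by
    rw [Finset.Ico_add_one_right_eq_Icc]
  rw [hIcc, Finset.sum_Ico_eq_sum_range]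
  simp only [Nat.add_sub_cancel]
  have tele : ∑ i ∈ Finset.range H, (D (1 + i) - D (1 + i + 1)) = D 1 - D (1 + H) := by
    have := Finset.sum_range_sub' (fun i => D (1 + i)) H
    simpa [add_assoc] using this
  rw [tele]
  have hD1 : D 1 = Val H P r π 1 s₁ - Val H P r π' 1 s₁ := by
    simp [hD, occup, Finset.sum_ite_eq', Finset.mem_univ]
  have hDH : D (1 + H) = 0 := by
    have hv : ∀ σ : ℕ → S → A → ℝ, ∀ s : S, Val H P r σ (1 + H) s = 0 := by
      intro σ s
      rw [add_comm]
      exact val_top H P r σ s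
    simp [hD, hv]
  rw [hD1, hDH, sub_zero]
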